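/- There exists a constant C > 0, depending only on δ, such that for every continuously differentiable f : ℝ² → ℝ with f(x,y) = −f(−x,y) = −f(x,−y) and ‖f‖_{***} < ∞, the function ∂ₓ⁻¹f(x,y) = −∫ₓ^∞ f(s,y) ds is well defined for all (x,y) ∈ ℝ², and ‖(1+r)^{2−δ} ∂ₓ⁻¹f‖_∞ + ‖(1+r)^{2−δ} ∂ₓ⁻¹(∂_yf)‖_∞ ≤ C ‖f‖_{***}. -/

import Mathlib

noncomputable section
open MeasureTheory Filter Set ENNReal Topology

namespace Stmt19

def pdx (f : ℝ → ℝ → ℝ) : ℝ → ℝ → ℝ := fun x y => deriv (fun t => f t y) x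
def pdy (f : ℝ → ℝ → ℝ) : ℝ → ℝ → ℝ := fun x y => deriv (fun t => f x t) y

/-- ∂ₓ⁻¹f(x,y) = −∫ₓ^∞ f(s,y) ds -/
def pdxInv (f : ℝ → ℝ → ℝ) : ℝ → ℝ → ℝ := fun x y => -∫ s in Ioi x, f s y

/-- weighted sup norm ‖(1+r)^a f‖_∞ as an extended nonnegative real -/
def wsup (a : ℝ) (f : ℝ → ℝ → ℝ) : ℝ≥0∞ :=
  ⨆ p : ℝ × ℝ, ENNReal.ofReal ((1 + Real.sqrt (p.1^2 + p.2^2)) ^ a * |f p.1 p.2|)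

def normC (f : ℝ → ℝ → ℝ) : ℝ≥0∞ :=
  (∫⁻ p : ℝ × ℝ, ENNReal.ofReal ((f p.1 p.2)^2 + (pdy f p.1 p.2)^2)) ^ ((1:ℝ)/2)

/-- the norm ‖·‖_{***} -/
def normSSS (δ : ℝ) (f : ℝ → ℝ → ℝ) : ℝ≥0∞ :=
  normC f + wsup (3 - δ) f + wsup (3 - δ) (pdy f) + wsup (3 - δ) (pdx (pdy f))

/-! ### Auxiliary lemmas -/

lemma one_le_w (s y : ℝ) : (1:ℝ) ≤ 1 + Real.sqrt (s^2 + y^2) :=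
  le_add_of_nonneg_right (Real.sqrt_nonneg _)

lemma w_pos (s y : ℝ) : (0:ℝ) < 1 + Real.sqrt (s^2 + y^2) :=
  lt_of_lt_of_le one_pos (one_le_w s y)

lemma abs_le_sqrt' (s y : ℝ) : |s| ≤ Real.sqrt (s^2 + y^2) := by
  rw [← Real.sqrt_sq_eq_abs]
  exact Real.sqrt_le_sqrt (by nlinarith [sq_nonneg y])

lemma abs_le_sqrt'' (s y : ℝ) : |y| ≤ Real.sqrt (s^2 + y^2) := by
  rw [← Real.sqrt_sq_eq_abs]
  exact Real.sqrt_le_sqrt (by nlinarith [sq_nonneg s])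

lemma cont_w (y : ℝ) : Continuous fun s : ℝ => 1 + Real.sqrt (s^2 + y^2) :=
  continuous_const.add ((Real.continuous_sqrt).comp
    (((continuous_id.pow 2)).add continuous_const))

/-- integrability of the weight on `Ioi a` -/
lemma bound_integrable {δ : ℝ} (hδ1 : 0 < δ) (hδ2 : δ < 1/2) (y a : ℝ) :
    IntegrableOn (fun s : ℝ => (1 + Real.sqrt (s^2 + y^2)) ^ (δ - 3)) (Ioi a) := by
  have h1 : Integrable (fun s : ℝ => ((1:ℝ) + ‖s‖) ^ (-(3 - δ))) := by
    apply integrable_one_add_norm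
    simp only [Module.finrank_self, Nat.cast_one]
    linarith
  refine (h1.integrableOn.mono' ?_ ?_)
  · exact (((cont_w y).rpow_const (fun s => Or.inl (w_pos s y).ne')).aestronglyMeasurable).restrict
  · refine ae_of_all _ fun s => ?_
    rw [Real.norm_eq_abs, abs_of_nonneg (Real.rpow_nonneg (w_pos s y).le _)]
    rw [show -(3 - δ) = δ - 3 by ring, Real.norm_eq_abs]
    exact Real.rpow_le_rpow_of_nonpos (by positivity)
      (by linarith [abs_le_sqrt' s y]) (by linarith)

lemma tail_integrable {δ : ℝ} (hδ1 : 0 < δ) (hδ2 : δ < 1/2) {b : ℝ} (hb : 0 ≤ b) :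
    IntegrableOn (fun s : ℝ => (1 + s) ^ (δ - 3)) (Ioi b) := by
  have h1 : Integrable (fun s : ℝ => ((1:ℝ) + ‖s‖) ^ (-(3 - δ))) := by
    apply integrable_one_add_norm
    simp only [Module.finrank_self, Nat.cast_one]
    linarith
  refine (h1.integrableOn.mono' ?_ ?_)
  · refine (ContinuousOn.aestronglyMeasurable ?_ measurableSet_Ioi)
    refine ContinuousOn.rpow_const (continuousOn_const.add continuousOn_id) ?_
    intro s hs
    exact Or.inl (by simp only [mem_Ioi] at hs; nlinarith)
  · rw [ae_restrict_iff' measurableSet_Ioi]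
    refine ae_of_all _ fun s hs => ?_
    simp only [mem_Ioi] at hs
    have hs0 : 0 ≤ s := le_trans hb hs.le
    rw [Real.norm_eq_abs, Real.norm_eq_abs, abs_of_nonneg hs0,
      abs_of_nonneg (Real.rpow_nonneg (by linarith) _), show -(3 - δ) = δ - 3 by ring]

lemma tail_integral {δ : ℝ} (hδ1 : 0 < δ) (hδ2 : δ < 1/2) {b : ℝ} (hb : 0 ≤ b) :
    ∫ s in Ioi b, (1 + s) ^ (δ - 3) = (1 + b) ^ (δ - 2) / (2 - δ) := by
  have hne : δ - 2 ≠ 0 := by linarith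
  have hderiv : ∀ s ∈ Ici b,
      HasDerivAt (fun u : ℝ => (1 + u) ^ (δ - 2) / (δ - 2)) ((1 + s) ^ (δ - 3)) s := by
    intro s hs
    have h0 : (0:ℝ) < 1 + s := by simp only [mem_Ici] at hs; linarith
    have h1 : HasDerivAt (fun u : ℝ => 1 + u) 1 s := (hasDerivAt_id s).const_add 1
    have h2 : HasDerivAt (fun u : ℝ => u ^ (δ - 2)) ((δ - 2) * (1 + s) ^ (δ - 3)) (1 + s) := by
      have := Real.hasDerivAt_rpow_const (x := 1 + s) (p := δ - 2) (Or.inl h0.ne')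
      convert this using 2
      ring_nf
    have h3 := (h2.comp s h1).div_const (δ - 2)
    exact h3.congr_deriv (by rw [mul_one, mul_div_cancel_left₀ _ hne])
  have htend : Tendsto (fun u : ℝ => (1 + u) ^ (δ - 2) / (δ - 2)) atTop (𝓝 0) := by
    have h := (tendsto_rpow_neg_atTop (y := 2 - δ) (by linarith)).comp
      (tendsto_atTop_add_const_left atTop 1 tendsto_id)
    have h' : Tendsto (fun u : ℝ => (1 + u) ^ (δ - 2)) atTop (𝓝 0) := by
      convert h using 2 with u
      simp only [Function.comp, id]
      rw [show δ - 2 = -(2 - δ) by ring]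
    simpa using h'.div_const (δ - 2)
  have := integral_Ioi_of_hasDerivAt_of_tendsto'
    (f := fun u : ℝ => (1 + u) ^ (δ - 2) / (δ - 2))
    (f' := fun s : ℝ => (1 + s) ^ (δ - 3)) hderiv (tail_integrable hδ1 hδ2 hb) htend
  rw [this, zero_sub, show (2:ℝ) - δ = -(δ - 2) by ring, div_neg]

/-- The key integral estimate. -/
lemma integral_bound {δ : ℝ} (hδ1 : 0 < δ) (hδ2 : δ < 1/2) (y : ℝ) {a : ℝ} (ha : 0 ≤ a) :
    ∫ s in Ioi a, (1 + Real.sqrt (s^2 + y^2)) ^ (δ - 3) ≤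
      8 * (1 + Real.sqrt (a^2 + y^2)) ^ (δ - 2) := by
  set b := max a |y| with hbdef
  have hab : a ≤ b := le_max_left _ _
  have hyb : |y| ≤ b := le_max_right _ _
  have h0b : 0 ≤ b := le_trans ha hab
  have hsplit : ∫ s in Ioi a, (1 + Real.sqrt (s^2 + y^2)) ^ (δ - 3) =
      (∫ s in Ioc a b, (1 + Real.sqrt (s^2 + y^2)) ^ (δ - 3)) +
      ∫ s in Ioi b, (1 + Real.sqrt (s^2 + y^2)) ^ (δ - 3) := by
    rw [← setIntegral_union (Ioc_disjoint_Ioi le_rfl) measurableSet_Ioi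
      ((bound_integrable hδ1 hδ2 y a).mono_set Ioc_subset_Ioi_self)
      (bound_integrable hδ1 hδ2 y b), Ioc_union_Ioi_eq_Ioi hab]
  have h1 : (∫ s in Ioc a b, (1 + Real.sqrt (s^2 + y^2)) ^ (δ - 3)) ≤ (1 + b) ^ (δ - 2) := by
    have hmono : (∫ s in Ioc a b, (1 + Real.sqrt (s^2 + y^2)) ^ (δ - 3)) ≤
        ∫ _ in Ioc a b, (1 + |y|) ^ (δ - 3) := by
      refine setIntegral_mono_on
        ((bound_integrable hδ1 hδ2 y a).mono_set Ioc_subset_Ioi_self)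
        (integrableOn_const measure_Ioc_lt_top.ne) measurableSet_Ioc ?_
      intro s _
      exact Real.rpow_le_rpow_of_nonpos (by positivity)
        (by linarith [abs_le_sqrt'' s y]) (by linarith)
    rw [setIntegral_const, measureReal_def, Real.volume_Ioc, smul_eq_mul,
      ENNReal.toReal_ofReal (by linarith)] at hmono
    refine le_trans hmono ?_
    rcases eq_or_lt_of_le hab with h | h
    · rw [← h]
      simp only [sub_self, zero_mul]
      positivity
    · have hay : a < |y| := by
        by_contra h''
        push_neg at h''
        rw [hbdef, max_eq_left h''] at h
        exact lt_irrefl _ h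
      have hby : b = |y| := hbdef.trans (max_eq_right hay.le)
      have hba : b - a ≤ 1 + b := by linarith [abs_nonneg y]
      calc (b - a) * (1 + |y|) ^ (δ - 3) = (b - a) * (1 + b) ^ (δ - 3) := by rw [hby]
        _ ≤ (1 + b) * (1 + b) ^ (δ - 3) := by
            exact mul_le_mul_of_nonneg_right hba (Real.rpow_nonneg (by linarith) _)
        _ = (1 + b) ^ (δ - 2) := by
            rw [show δ - 2 = 1 + (δ - 3) by ring,
              Real.rpow_one_add' (by linarith) (by intro hh; linarith)]
  have h2 : (∫ s in Ioi b, (1 + Real.sqrt (s^2 + y^2)) ^ (δ - 3)) ≤ (1 + b) ^ (δ - 2) := by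
    have hmono : (∫ s in Ioi b, (1 + Real.sqrt (s^2 + y^2)) ^ (δ - 3)) ≤
        ∫ s in Ioi b, (1 + s) ^ (δ - 3) := by
      refine setIntegral_mono_on (bound_integrable hδ1 hδ2 y b)
        (tail_integrable hδ1 hδ2 h0b) measurableSet_Ioi ?_
      intro s hs
      simp only [mem_Ioi] at hs
      have hs0 : 0 ≤ s := le_trans h0b hs.le
      refine Real.rpow_le_rpow_of_nonpos (by linarith) ?_ (by linarith)
      have := abs_le_sqrt' s y
      rw [abs_of_nonneg hs0] at this
      linarith
    rw [tail_integral hδ1 hδ2 h0b] at hmono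
    refine le_trans hmono ?_
    exact div_le_self (Real.rpow_nonneg (by linarith) _) (by linarith)
  have h3 : (1 + b) ^ (δ - 2) ≤ 4 * (1 + Real.sqrt (a^2 + y^2)) ^ (δ - 2) := by
    have hle : 1 + Real.sqrt (a^2 + y^2) ≤ 2 * (1 + b) := by
      have h4 : Real.sqrt (a^2 + y^2) ≤ a + |y| := by
        rw [← Real.sqrt_sq (by positivity : (0:ℝ) ≤ a + |y|)]
        refine Real.sqrt_le_sqrt ?_
        nlinarith [abs_nonneg y, sq_abs y]
      have : a + |y| ≤ 2 * b := by
        have := le_max_left a |y|; have := le_max_right a |y|; linarith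
      linarith
    have h5 : (2 * (1 + b)) ^ (δ - 2) ≤ (1 + Real.sqrt (a^2 + y^2)) ^ (δ - 2) :=
      Real.rpow_le_rpow_of_nonpos (w_pos a y) hle (by linarith)
    have h6 : (2 * (1 + b)) ^ (δ - 2) = 2 ^ (δ - 2) * (1 + b) ^ (δ - 2) :=
      Real.mul_rpow (by norm_num) (by linarith)
    have h7 : (1/4 : ℝ) ≤ 2 ^ (δ - 2) := by
      have h8 : (2:ℝ) ^ (-2 : ℝ) = 1/4 := by
        rw [show (-2 : ℝ) = -((2:ℕ):ℝ) by norm_num, Real.rpow_neg (by norm_num),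
          Real.rpow_natCast]
        norm_num
      calc (1/4 : ℝ) = (2:ℝ) ^ (-2 : ℝ) := h8.symm
        _ ≤ 2 ^ (δ - 2) := Real.rpow_le_rpow_of_exponent_le (by norm_num) (by linarith)
    nlinarith [Real.rpow_nonneg (show (0:ℝ) ≤ 1 + b by linarith) (δ - 2),
      Real.rpow_nonneg (w_pos a y).le (δ - 2)]
  linarith

/-- The main per-function estimate. -/
lemma key {δ : ℝ} (hδ1 : 0 < δ) (hδ2 : δ < 1/2) (g : ℝ → ℝ → ℝ) (M : ℝ) (hM0 : 0 ≤ M)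
    (hodd : ∀ s y : ℝ, g (-s) y = -g s y)
    (hcont : ∀ y : ℝ, Continuous fun s => g s y)
    (hbd : ∀ s y : ℝ, |g s y| ≤ M * (1 + Real.sqrt (s^2 + y^2)) ^ (δ - 3)) :
    (∀ x y : ℝ, IntegrableOn (fun s => g s y) (Ioi x)) ∧
    (∀ x y : ℝ, (1 + Real.sqrt (x^2 + y^2)) ^ (2 - δ) * |∫ s in Ioi x, g s y| ≤ 8 * M) := by
  have hint : ∀ x y : ℝ, IntegrableOn (fun s => g s y) (Ioi x) := by
    intro x y
    refine ((bound_integrable hδ1 hδ2 y x).const_mul M).mono'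
      ((hcont y).aestronglyMeasurable.restrict) (ae_of_all _ fun s => ?_)
    rw [Real.norm_eq_abs]
    exact hbd s y
  refine ⟨hint, ?_⟩
  have hbd0 : ∀ x y : ℝ, 0 ≤ x →
      |∫ s in Ioi x, g s y| ≤ 8 * M * (1 + Real.sqrt (x^2 + y^2)) ^ (δ - 2) := by
    intro x y hx
    have habs : |∫ s in Ioi x, g s y| ≤ ∫ s in Ioi x, |g s y| := by
      simpa [Real.norm_eq_abs] using
        norm_integral_le_integral_norm (μ := volume.restrict (Ioi x)) (fun s => g s y)
    have hmono : (∫ s in Ioi x, |g s y|) ≤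
        ∫ s in Ioi x, M * (1 + Real.sqrt (s^2 + y^2)) ^ (δ - 3) := by
      refine setIntegral_mono_on (hint x y).abs
        ((bound_integrable hδ1 hδ2 y x).const_mul M) measurableSet_Ioi ?_
      intro s _
      exact hbd s y
    rw [MeasureTheory.integral_const_mul] at hmono
    have := integral_bound hδ1 hδ2 y hx
    calc |∫ s in Ioi x, g s y| ≤ M * ∫ s in Ioi x, (1 + Real.sqrt (s^2 + y^2)) ^ (δ - 3) :=
          le_trans habs hmono
      _ ≤ M * (8 * (1 + Real.sqrt (x^2 + y^2)) ^ (δ - 2)) := by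
          exact mul_le_mul_of_nonneg_left this hM0
      _ = 8 * M * (1 + Real.sqrt (x^2 + y^2)) ^ (δ - 2) := by ring
  have hoddint : ∀ x y : ℝ, x < 0 → (∫ s in Ioi x, g s y) = ∫ s in Ioi (-x), g s y := by
    intro x y hx
    have hxx : x ≤ -x := by linarith
    rw [← Ioc_union_Ioi_eq_Ioi hxx, setIntegral_union (Ioc_disjoint_Ioi le_rfl)
      measurableSet_Ioi ((hint x y).mono_set Ioc_subset_Ioi_self) (hint (-x) y)]
    have hzero : (∫ s in Ioc x (-x), g s y) = 0 := by
      rw [← intervalIntegral.integral_of_le hxx]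
      have hcomp := intervalIntegral.integral_comp_neg (a := x) (b := -x) (fun s => g s y)
      simp only [neg_neg] at hcomp
      have : (∫ s in x..(-x), g (-s) y) = -∫ s in x..(-x), g s y := by
        simp only [hodd]
        exact intervalIntegral.integral_neg
      rw [this] at hcomp
      linarith
    rw [hzero, zero_add]
  intro x y
  rcases le_or_gt 0 x with hx | hx
  · have h := hbd0 x y hx
    calc (1 + Real.sqrt (x^2 + y^2)) ^ (2 - δ) * |∫ s in Ioi x, g s y|
        ≤ (1 + Real.sqrt (x^2 + y^2)) ^ (2 - δ) *
          (8 * M * (1 + Real.sqrt (x^2 + y^2)) ^ (δ - 2)) :=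
          mul_le_mul_of_nonneg_left h (Real.rpow_nonneg (w_pos x y).le _)
      _ = 8 * M * ((1 + Real.sqrt (x^2 + y^2)) ^ (2 - δ) *
          (1 + Real.sqrt (x^2 + y^2)) ^ (δ - 2)) := by ring
      _ = 8 * M := by
          rw [← Real.rpow_add (w_pos x y), show (2 - δ) + (δ - 2) = 0 by ring,
            Real.rpow_zero, mul_one]
  · have hsq : x^2 = (-x)^2 := by ring
    rw [hoddint x y hx, hsq]
    have h := hbd0 (-x) y (by linarith)
    calc (1 + Real.sqrt ((-x)^2 + y^2)) ^ (2 - δ) * |∫ s in Ioi (-x), g s y|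
        ≤ (1 + Real.sqrt ((-x)^2 + y^2)) ^ (2 - δ) *
          (8 * M * (1 + Real.sqrt ((-x)^2 + y^2)) ^ (δ - 2)) :=
          mul_le_mul_of_nonneg_left h (Real.rpow_nonneg (w_pos (-x) y).le _)
      _ = 8 * M * ((1 + Real.sqrt ((-x)^2 + y^2)) ^ (2 - δ) *
          (1 + Real.sqrt ((-x)^2 + y^2)) ^ (δ - 2)) := by ring
      _ = 8 * M := by
          rw [← Real.rpow_add (w_pos (-x) y), show (2 - δ) + (δ - 2) = 0 by ring,
            Real.rpow_zero, mul_one]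

theorem pdxInv_estimate (δ : ℝ) (hδ : δ ∈ Ioo (0:ℝ) (1/2)) :
    ∃ C > (0:ℝ), ∀ f : ℝ → ℝ → ℝ,
      ContDiff ℝ 1 (Function.uncurry f) →
      (∀ x y : ℝ, f x y = -f (-x) y ∧ f x y = -f x (-y)) →
      normSSS δ f < ⊤ →
      (∀ x y : ℝ, IntegrableOn (fun s => f s y) (Ioi x)) ∧
      (∀ x y : ℝ, IntegrableOn (fun s => pdy f s y) (Ioi x)) ∧
      wsup (2 - δ) (pdxInv f) + wsup (2 - δ) (pdxInv (pdy f)) ≤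
        ENNReal.ofReal C * normSSS δ f := by
  obtain ⟨hδ1, hδ2⟩ := hδ
  refine ⟨8, by norm_num, ?_⟩
  intro f hf1 hsym hfin
  -- finiteness of the two weighted sups
  have hne1 : wsup (3 - δ) f ≠ ⊤ := by
    refine ne_top_of_le_ne_top hfin.ne ?_
    calc wsup (3 - δ) f ≤ normC f + wsup (3 - δ) f := le_add_self
      _ ≤ normC f + wsup (3 - δ) f + wsup (3 - δ) (pdy f) := le_self_add
      _ ≤ normSSS δ f := le_self_add
  have hne2 : wsup (3 - δ) (pdy f) ≠ ⊤ := by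
    refine ne_top_of_le_ne_top hfin.ne ?_
    calc wsup (3 - δ) (pdy f) ≤ normC f + wsup (3 - δ) f + wsup (3 - δ) (pdy f) := le_add_self
      _ ≤ normSSS δ f := le_self_add
  set M₁ := (wsup (3 - δ) f).toReal with hM₁
  set M₂ := (wsup (3 - δ) (pdy f)).toReal with hM₂
  have hM₁0 : 0 ≤ M₁ := ENNReal.toReal_nonneg
  have hM₂0 : 0 ≤ M₂ := ENNReal.toReal_nonneg
  -- pointwise bound extraction
  have hbd_gen : ∀ (g : ℝ → ℝ → ℝ) (hg : wsup (3 - δ) g ≠ ⊤) (s y : ℝ),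
      |g s y| ≤ (wsup (3 - δ) g).toReal * (1 + Real.sqrt (s^2 + y^2)) ^ (δ - 3) := by
    intro g hg s y
    have h1 : (1 + Real.sqrt (s^2 + y^2)) ^ (3 - δ) * |g s y| ≤ (wsup (3 - δ) g).toReal := by
      rw [← ENNReal.ofReal_le_iff_le_toReal hg]
      exact le_iSup (fun p : ℝ × ℝ =>
        ENNReal.ofReal ((1 + Real.sqrt (p.1^2 + p.2^2)) ^ (3 - δ) * |g p.1 p.2|)) (s, y)
    have hw := w_pos s y
    calc |g s y| = (1 + Real.sqrt (s^2 + y^2)) ^ (δ - 3) *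
          ((1 + Real.sqrt (s^2 + y^2)) ^ (3 - δ) * |g s y|) := by
          rw [← mul_assoc, ← Real.rpow_add hw, show (δ - 3) + (3 - δ) = 0 by ring,
            Real.rpow_zero, one_mul]
      _ ≤ (1 + Real.sqrt (s^2 + y^2)) ^ (δ - 3) * (wsup (3 - δ) g).toReal :=
          mul_le_mul_of_nonneg_left h1 (Real.rpow_nonneg hw.le _)
      _ = (wsup (3 - δ) g).toReal * (1 + Real.sqrt (s^2 + y^2)) ^ (δ - 3) := mul_comm _ _
  -- properties of f
  have hodd_f : ∀ s y : ℝ, f (-s) y = -f s y := by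
    intro s y
    have := (hsym s y).1
    linarith
  have hcont_f : ∀ y : ℝ, Continuous fun s => f s y := by
    intro y
    exact hf1.continuous.comp (continuous_id.prodMk continuous_const)
  -- properties of pdy f
  have hpdy_eq : ∀ x y : ℝ, pdy f x y = fderiv ℝ (Function.uncurry f) (x, y) (0, 1) := by
    intro x y
    have hdiff := hf1.differentiable one_ne_zero
    have hF : HasFDerivAt (Function.uncurry f)
        (fderiv ℝ (Function.uncurry f) (x, y)) (x, y) := (hdiff (x, y)).hasFDerivAt
    have hcurve : HasDerivAt (fun t : ℝ => ((x, t) : ℝ × ℝ)) (0, 1) y :=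
      (hasDerivAt_const y x).prodMk (hasDerivAt_id y)
    have := hF.comp_hasDerivAt y hcurve
    exact this.deriv
  have hcont_pdy : ∀ y : ℝ, Continuous fun s => pdy f s y := by
    intro y
    have hc : Continuous (fderiv ℝ (Function.uncurry f)) :=
      hf1.continuous_fderiv one_ne_zero
    have : Continuous fun s : ℝ => fderiv ℝ (Function.uncurry f) (s, y) (0, 1) :=
      (hc.comp (continuous_id.prodMk continuous_const)).clm_apply continuous_const
    refine this.congr fun s => ?_
    rw [hpdy_eq]
  have hodd_pdy : ∀ s y : ℝ, pdy f (-s) y = -pdy f s y := by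
    intro s y
    have hfun : (fun t => f (-s) t) = fun t => -(f s t) := by
      funext t
      have := (hsym s t).1
      linarith
    unfold pdy
    rw [hfun]
    exact deriv.neg
  -- apply the key lemma
  obtain ⟨hint_f, hbd_f⟩ := key hδ1 hδ2 f M₁ hM₁0 hodd_f hcont_f (hbd_gen f hne1)
  obtain ⟨hint_pdy, hbd_pdy⟩ := key hδ1 hδ2 (pdy f) M₂ hM₂0 hodd_pdy hcont_pdy (hbd_gen _ hne2)
  refine ⟨hint_f, hint_pdy, ?_⟩
  have hws1 : wsup (2 - δ) (pdxInv f) ≤ ENNReal.ofReal (8 * M₁) := by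
    refine iSup_le fun p => ENNReal.ofReal_le_ofReal ?_
    have := hbd_f p.1 p.2
    simpa [pdxInv, abs_neg] using this
  have hws2 : wsup (2 - δ) (pdxInv (pdy f)) ≤ ENNReal.ofReal (8 * M₂) := by
    refine iSup_le fun p => ENNReal.ofReal_le_ofReal ?_
    have := hbd_pdy p.1 p.2
    simpa [pdxInv, abs_neg] using this
  calc wsup (2 - δ) (pdxInv f) + wsup (2 - δ) (pdxInv (pdy f))
      ≤ ENNReal.ofReal (8 * M₁) + ENNReal.ofReal (8 * M₂) := add_le_add hws1 hws2
    _ = ENNReal.ofReal 8 * (ENNReal.ofReal M₁ + ENNReal.ofReal M₂) := by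
        rw [mul_add, ← ENNReal.ofReal_mul (by norm_num : (0:ℝ) ≤ 8),
          ← ENNReal.ofReal_mul (by norm_num : (0:ℝ) ≤ 8)]
    _ = ENNReal.ofReal 8 * (wsup (3 - δ) f + wsup (3 - δ) (pdy f)) := by
        rw [hM₁, hM₂, ENNReal.ofReal_toReal hne1, ENNReal.ofReal_toReal hne2]
    _ ≤ ENNReal.ofReal 8 * normSSS δ f := by
        refine mul_le_mul_right ?_ _
        calc wsup (3 - δ) f + wsup (3 - δ) (pdy f)
            ≤ (normC f + wsup (3 - δ) f) + wsup (3 - δ) (pdy f) :=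
              add_le_add le_add_self le_rfl
          _ ≤ normSSS δ f := le_self_add

end Stmt19
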